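/- With the hypotheses of the Decompose lemma, (U₁ᵀYU₂)(U₁ᵀXU₂)^{-1} = (U₁ᵀM₁) D (U₁ᵀM₁)^{-1}, where U₁ᵀM₁ is invertible. -/

import Mathlib

open Matrix

private lemma isUnit_of_rank_eq {k : ℕ} (G : Matrix (Fin k) (Fin k) ℝ)
    (h : G.rank = k) : IsUnit G := by
  rw [← Matrix.mulVec_surjective_iff_isUnit]
  rw [show G.mulVec = G.mulVecLin from rfl, ← LinearMap.range_eq_top]
  apply Submodule.eq_top_of_finrank_eq
  simpa [Matrix.rank] using h

private lemma exists_factor {d k : ℕ} (M U : Matrix (Fin d) (Fin k) ℝ)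
    (h : LinearMap.range U.mulVecLin ≤ LinearMap.range M.mulVecLin) :
    ∃ A : Matrix (Fin k) (Fin k) ℝ, M * A = U := by
  have hcol : ∀ j : Fin k, ∃ a : Fin k → ℝ, M.mulVec a = fun i => U i j := by
    intro j
    have : (fun i => U i j) ∈ LinearMap.range U.mulVecLin := by
      refine ⟨Pi.single j 1, ?_⟩
      ext i
      simp [Matrix.mulVecLin, Matrix.mulVec_single]
    exact h this
  refine ⟨Matrix.of fun i j => (hcol j).choose i, ?_⟩
  ext i j
  have := congrFun ((hcol j).choose_spec) i
  simpa [Matrix.mulVec, Matrix.mul_apply, dotProduct] using this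

theorem decompose_explicit_similarity (d k : ℕ)
    (M₁ M₂ : Matrix (Fin d) (Fin k) ℝ) (D : Matrix (Fin k) (Fin k) ℝ)
    (hM₁ : M₁.rank = k) (hM₂ : M₂.rank = k)
    (Ddiag : Fin k → ℝ) (hD : D = Matrix.diagonal Ddiag)
    (X Y : Matrix (Fin d) (Fin d) ℝ)
    (hX : X = M₁ * M₂ᵀ) (hY : Y = M₁ * D * M₂ᵀ)
    (U₁ U₂ : Matrix (Fin d) (Fin k) ℝ)
    (hU₁ : LinearMap.range U₁.mulVecLin = LinearMap.range X.mulVecLin)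
    (hU₂ : LinearMap.range U₂.mulVecLin = LinearMap.range Xᵀ.mulVecLin) :
    IsUnit (U₁ᵀ * M₁) ∧
    (U₁ᵀ * Y * U₂) * (U₁ᵀ * X * U₂)⁻¹ = (U₁ᵀ * M₁) * D * (U₁ᵀ * M₁)⁻¹ := by
  -- Gram matrices are units
  have hG₁ : IsUnit (M₁ᵀ * M₁) :=
    isUnit_of_rank_eq _ (by rw [Matrix.rank_transpose_mul_self]; exact hM₁)
  have hG₂ : IsUnit (M₂ᵀ * M₂) :=
    isUnit_of_rank_eq _ (by rw [Matrix.rank_transpose_mul_self]; exact hM₂)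
  -- range X = range M₁ (and similarly for transpose)
  have hsurj : ∀ M : Matrix (Fin d) (Fin k) ℝ, M.rank = k →
      LinearMap.range Mᵀ.mulVecLin = ⊤ := by
    intro M hM
    apply Submodule.eq_top_of_finrank_eq
    have : Mᵀ.rank = k := by rw [Matrix.rank_transpose]; exact hM
    simpa [Matrix.rank] using this
  have hrangeX : LinearMap.range X.mulVecLin = LinearMap.range M₁.mulVecLin := by
    rw [hX, Matrix.mulVecLin_mul, LinearMap.range_comp, hsurj M₂ hM₂,
      Submodule.map_top]
  have hrangeXT : LinearMap.range Xᵀ.mulVecLin = LinearMap.range M₂.mulVecLin := by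
    rw [hX, Matrix.transpose_mul, Matrix.transpose_transpose, Matrix.mulVecLin_mul,
      LinearMap.range_comp, hsurj M₁ hM₁, Submodule.map_top]
  -- factorizations
  obtain ⟨A, hA⟩ := exists_factor M₁ U₁ (by rw [hU₁, hrangeX])
  obtain ⟨A', hA'⟩ := exists_factor U₁ M₁ (by rw [← hrangeX, ← hU₁])
  obtain ⟨B, hB⟩ := exists_factor M₂ U₂ (by rw [hU₂, hrangeXT])
  -- A is a unit
  have hAA' : A * A' = (1 : Matrix (Fin k) (Fin k) ℝ) := by
    have h1 : M₁ * (A * A') = M₁ * (1 : Matrix (Fin k) (Fin k) ℝ) := by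
      rw [← Matrix.mul_assoc, hA, hA', Matrix.mul_one]
    have h2 : (M₁ᵀ * M₁) * (A * A') = (M₁ᵀ * M₁) * (1 : Matrix (Fin k) (Fin k) ℝ) := by
      rw [Matrix.mul_assoc, Matrix.mul_assoc, h1]
    exact hG₁.mul_left_cancel h2
  have hAunit : IsUnit A := by
    rw [Matrix.isUnit_iff_isUnit_det]
    exact IsUnit.of_mul_eq_one A'.det (by rw [← Matrix.det_mul, hAA', Matrix.det_one])
  have hBunit : IsUnit B := by
    obtain ⟨B', hB'⟩ := exists_factor U₂ M₂ (by rw [← hrangeXT, ← hU₂])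
    have hBB' : B * B' = (1 : Matrix (Fin k) (Fin k) ℝ) := by
      have h1 : M₂ * (B * B') = M₂ * (1 : Matrix (Fin k) (Fin k) ℝ) := by
        rw [← Matrix.mul_assoc, hB, hB', Matrix.mul_one]
      have h2 : (M₂ᵀ * M₂) * (B * B') = (M₂ᵀ * M₂) * (1 : Matrix (Fin k) (Fin k) ℝ) := by
        rw [Matrix.mul_assoc, Matrix.mul_assoc, h1]
      exact hG₂.mul_left_cancel h2
    rw [Matrix.isUnit_iff_isUnit_det]
    exact IsUnit.of_mul_eq_one B'.det (by rw [← Matrix.det_mul, hBB', Matrix.det_one])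
  -- key rewrites
  have hU₁M₁ : U₁ᵀ * M₁ = Aᵀ * (M₁ᵀ * M₁) := by
    rw [← hA, Matrix.transpose_mul, Matrix.mul_assoc]
  have hATunit : IsUnit Aᵀ := by
    rw [Matrix.isUnit_iff_isUnit_det, Matrix.det_transpose]
    exact (Matrix.isUnit_iff_isUnit_det A).mp hAunit
  have hP : IsUnit (Aᵀ * (M₁ᵀ * M₁)) := hATunit.mul hG₁
  have hQ : IsUnit ((M₂ᵀ * M₂) * B) := hG₂.mul hBunit
  refine ⟨by rw [hU₁M₁]; exact hP, ?_⟩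
  set P := Aᵀ * (M₁ᵀ * M₁) with hPdef
  set Q := (M₂ᵀ * M₂) * B with hQdef
  have hXeq : U₁ᵀ * X * U₂ = P * Q := by
    rw [hX, ← hA, ← hB, Matrix.transpose_mul, hPdef, hQdef]
    simp only [Matrix.mul_assoc]
  have hYeq : U₁ᵀ * Y * U₂ = P * D * Q := by
    rw [hY, ← hA, ← hB, Matrix.transpose_mul, hPdef, hQdef]
    simp only [Matrix.mul_assoc]
  rw [hXeq, hYeq, hU₁M₁, Matrix.mul_inv_rev,
    show P * D * Q * (Q⁻¹ * P⁻¹) = P * D * (Q * Q⁻¹) * P⁻¹ by noncomm_ring,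
    Matrix.mul_nonsing_inv _ ((Matrix.isUnit_iff_isUnit_det Q).mp hQ), Matrix.mul_one]
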